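/- Define A₁(y₁) = y₁ and A_{k+1}(y₁,...,y_{k+1}) = A_k(a₁(y₁,y₂),...,a_k(y₁,...,y_{k+1})) with a_k(y₁,...,y_{k+1}) = y_{k+1}(y₁+⋯+y_k). Then for every m ≥ 1 there exists a homogeneous polynomial B_{m−1} ∈ ℤ[y₁,...,y_{m−1}] of degree 2^{m−1} − m with nonnegative coefficients such that A_m(y₁,...,y_m) = y₁ ⋯ y_m · B_{m−1}(y₁,...,y_{m−1}); moreover A_m is homogeneous of degree 2^{m−1}. -/

import Mathlib

noncomputable def pecker : (m : ℕ) → (Fin (m + 1) → ℝ) → ℝ → ℝ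
  | 0, y, t => t - y 0
  | m + 1, y, t =>
      pecker m
        (fun k : Fin (m + 1) =>
          y k.succ * ∑ i : Fin (k.1 + 1), y ⟨i.1, by have := i.isLt; have := k.isLt; omega⟩)
        ((t - ∑ i, y i) ^ 2)

noncomputable def peckerA : (m : ℕ) → (Fin (m + 1) → ℝ) → ℝ
  | 0, y => y 0
  | m + 1, y =>
      peckerA m
        (fun k : Fin (m + 1) =>
          y k.succ * ∑ i : Fin (k.1 + 1), y ⟨i.1, by have := i.isLt; have := k.isLt; omega⟩)

open MvPolynomial in
noncomputable def peckerB : (m : ℕ) → MvPolynomial (Fin m) ℕ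
  | 0 => 1
  | m + 1 =>
      (∏ j : Fin m, ∑ i : Fin (j.1 + 2),
          (X (⟨i.1, by have := i.isLt; have := j.isLt; omega⟩ : Fin (m + 1)) :
            MvPolynomial (Fin (m + 1)) ℕ)) *
        MvPolynomial.bind₁
          (fun k : Fin m =>
            (X (k.succ : Fin (m + 1)) : MvPolynomial (Fin (m + 1)) ℕ) *
              ∑ i : Fin (k.1 + 1),
                X (⟨i.1, by have := i.isLt; have := k.isLt; omega⟩ : Fin (m + 1)))
          (peckerB m)

open MvPolynomial

lemma peckerB_homog (m : ℕ) : (peckerB m).IsHomogeneous (2 ^ m - (m + 1)) := by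
  induction m with
  | zero => simpa [peckerB] using isHomogeneous_one (Fin 0) ℕ
  | succ m ih =>
      have hlt : m < 2 ^ m := Nat.lt_two_pow_self
      have hdeg : 2 ^ (m + 1) - (m + 2) = (∑ _j : Fin m, 1) + 2 * (2 ^ m - (m + 1)) := by
        simp only [Finset.sum_const, Finset.card_univ, Fintype.card_fin, smul_eq_mul, mul_one]
        have : 2 ^ (m + 1) = 2 * 2 ^ m := by ring
        omega
      rw [peckerB, hdeg]
      apply IsHomogeneous.mul
      · apply IsHomogeneous.prod
        intro j _
        apply IsHomogeneous.sum
        intro i _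
        exact isHomogeneous_X _ _
      · apply ih.aeval
        intro k
        rw [show (2 : ℕ) = 1 + 1 from rfl]
        apply IsHomogeneous.mul (isHomogeneous_X _ _)
        apply IsHomogeneous.sum
        intro i _
        exact isHomogeneous_X _ _

lemma peckerA_eval (m : ℕ) (y : Fin (m + 1) → ℝ) :
    peckerA m y = (∏ i, y i) *
      MvPolynomial.aeval (fun i : Fin m => y i.castSucc) (peckerB m) := by
  induction m with
  | zero => simp [peckerA, peckerB]
  | succ m ih =>
      set a : Fin (m + 1) → ℝ := fun k : Fin (m + 1) =>
        y k.succ * ∑ i : Fin (k.1 + 1), y ⟨i.1, by have := i.isLt; have := k.isLt; omega⟩ with ha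
      have h1 : peckerA (m + 1) y = peckerA m a := rfl
      rw [h1, ih a]
      -- shorthand for the partial sums
      set s : Fin (m + 1) → ℝ := fun k =>
        ∑ i : Fin (k.1 + 1), y ⟨i.1, by have := i.isLt; have := k.isLt; omega⟩ with hs
      have haks : ∀ k, a k = y k.succ * s k := fun k => rfl
      have hprod : (∏ k, a k) = (∏ i, y i) * ∏ j : Fin m, s j.succ := by
        simp only [haks]
        rw [Finset.prod_mul_distrib]
        have h0 : s 0 = y 0 := by
          exact Fin.sum_univ_one (fun i : Fin 1 => y ⟨i.1, by omega⟩)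
        have : (∏ k : Fin (m + 1), s k) = s 0 * ∏ j : Fin m, s j.succ :=
          Fin.prod_univ_succ s
        rw [this, h0, show (∏ i, y i) = y 0 * ∏ k : Fin (m + 1), y k.succ from
          Fin.prod_univ_succ y]
        ring
      rw [hprod, peckerB]
      rw [map_mul, map_prod]
      rw [aeval_bind₁]
      have hsum : ∀ j : Fin m,
          (MvPolynomial.aeval (fun i : Fin (m + 1) => y i.castSucc)
            (∑ i : Fin (j.1 + 2),
              (X (⟨i.1, by have := i.isLt; have := j.isLt; omega⟩ : Fin (m + 1)) :
                MvPolynomial (Fin (m + 1)) ℕ)) : ℝ) = s j.succ := by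
        intro j
        rw [map_sum]
        simp only [aeval_X, hs]
        rfl
      have hinner : ∀ k : Fin m,
          (MvPolynomial.aeval (fun i : Fin (m + 1) => y i.castSucc)
            ((X (k.succ : Fin (m + 1)) : MvPolynomial (Fin (m + 1)) ℕ) *
              ∑ i : Fin (k.1 + 1),
                X (⟨i.1, by have := i.isLt; have := k.isLt; omega⟩ : Fin (m + 1))) : ℝ) =
            a k.castSucc := by
        intro k
        rw [map_mul, map_sum]
        simp only [aeval_X, haks, hs]
        rfl
      rw [Finset.prod_congr rfl fun j _ => hsum j]
      have : (fun k : Fin m =>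
          (MvPolynomial.aeval (fun i : Fin (m + 1) => y i.castSucc)
            ((X (k.succ : Fin (m + 1)) : MvPolynomial (Fin (m + 1)) ℕ) *
              ∑ i : Fin (k.1 + 1),
                X (⟨i.1, by have := i.isLt; have := k.isLt; omega⟩ : Fin (m + 1))) : ℝ)) =
          fun k : Fin m => a k.castSucc := funext hinner
      rw [this]
      ring

lemma peckerA_smul (m : ℕ) :
    ∀ (c : ℝ) (y : Fin (m + 1) → ℝ), peckerA m (c • y) = c ^ (2 ^ m) * peckerA m y := by
  induction m with
  | zero => intro c y; simp [peckerA]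
  | succ m ih =>
      intro c y
      have h1 : peckerA (m + 1) (c • y) = peckerA m
          (fun k : Fin (m + 1) =>
            (c • y) k.succ * ∑ i : Fin (k.1 + 1),
              (c • y) ⟨i.1, by have := i.isLt; have := k.isLt; omega⟩) := rfl
      have h2 : peckerA (m + 1) y = peckerA m
          (fun k : Fin (m + 1) =>
            y k.succ * ∑ i : Fin (k.1 + 1),
              y ⟨i.1, by have := i.isLt; have := k.isLt; omega⟩) := rfl
      rw [h1, h2]
      have harg : (fun k : Fin (m + 1) =>
          (c • y) k.succ * ∑ i : Fin (k.1 + 1),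
            (c • y) ⟨i.1, by have := i.isLt; have := k.isLt; omega⟩) =
          (c ^ 2) • (fun k : Fin (m + 1) =>
            y k.succ * ∑ i : Fin (k.1 + 1),
              y ⟨i.1, by have := i.isLt; have := k.isLt; omega⟩) := by
        funext k
        simp only [Pi.smul_apply, smul_eq_mul]
        rw [← Finset.mul_sum]
        ring
      rw [harg, ih (c ^ 2)]
      rw [← pow_mul]
      congr 1
      ring

theorem stmt16 (m : ℕ) :
    (∀ (c : ℝ) (y : Fin (m + 1) → ℝ), peckerA m (c • y) = c ^ (2 ^ m) * peckerA m y) ∧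
    ∃ B : MvPolynomial (Fin m) ℤ,
      (∀ d, 0 ≤ B.coeff d) ∧
      B.IsHomogeneous (2 ^ m - (m + 1)) ∧
      ∀ y : Fin (m + 1) → ℝ,
        peckerA m y = (∏ i, y i) *
          MvPolynomial.eval (fun i : Fin m => y i.castSucc)
            (MvPolynomial.map (Int.castRingHom ℝ) B) := by
  refine ⟨peckerA_smul m, MvPolynomial.map (Nat.castRingHom ℤ) (peckerB m), ?_, ?_, ?_⟩
  · intro d
    rw [MvPolynomial.coeff_map]
    exact Int.natCast_nonneg _
  · exact (peckerB_homog m).map _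
  · intro y
    rw [peckerA_eval m y]
    congr 1
    rw [MvPolynomial.map_map]
    have hhom : (Int.castRingHom ℝ).comp (Nat.castRingHom ℤ) = algebraMap ℕ ℝ := by
      ext n
      simp
    rw [hhom, MvPolynomial.eval_map]
    rw [MvPolynomial.aeval_def]
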